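/- Let G = (V,E) be a finite graph, q ≥ 1 an integer, β ≥ 0, and let P_G be the transition matrix of the Swendsen–Wang dynamics for the q-state Potts model on G at inverse temperature β. Then for all σ, τ ∈ Ω_P, every vertex v ∈ V and all colors k, l ∈ {1,…,q}: P_G(σ^{v,k}, τ^{v,l}) ≤ (q e^{2β} − (q−1) e^{β})^{deg_G(v)} · P_G(σ,τ), where deg_G(v) is the degree of v in G. -/

import Mathlib

open Finset

noncomputable section

/-- `ξ` is an eigenvalue of the kernel `P` on the finite state space `Ω`. -/
def IsEigenvalue {Ω : Type*} [Fintype Ω] (P : Ω → Ω → ℝ) (ξ : ℝ) : Prop :=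
  ∃ f : Ω → ℝ, f ≠ 0 ∧ ∀ x, (∑ y, P x y * f y) = ξ * f x

/-- The (absolute) spectral gap: `1` minus the largest absolute value of an
eigenvalue different from `1`. -/
def spectralGap {Ω : Type*} [Fintype Ω] (P : Ω → Ω → ℝ) : ℝ :=
  1 - sSup {r : ℝ | ∃ ξ : ℝ, IsEigenvalue P ξ ∧ ξ ≠ 1 ∧ r = |ξ|}

variable {V E : Type*}

/-- The graph on the vertex set `V` induced by the edges in `A` (a multigraph
`(V, E)` is described by the map `ends` sending an edge to its two endpoints). -/
def subGraph (ends : E → V × V) (A : Finset E) : SimpleGraph V :=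
  SimpleGraph.fromRel fun a b => ∃ e ∈ A, ends e = (a, b) ∨ ends e = (b, a)

/-- `c(A)`: the number of connected components of the spanning subgraph `(V, A)`. -/
def compCount (ends : E → V × V) (A : Finset E) : ℕ :=
  Nat.card (subGraph ends A).ConnectedComponent

/-- The endpoints of the edge `e` are connected in the spanning subgraph `(V, A)`. -/
def connectedIn (ends : E → V × V) (A : Finset E) (e : E) : Prop :=
  (subGraph ends A).Reachable (ends e).1 (ends e).2

/-- The degree of the vertex `v` in the multigraph `(V, E)`. -/
def degree [Fintype E] [DecidableEq V] (ends : E → V × V) (v : V) : ℕ :=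
  (univ.filter fun e => (ends e).1 = v ∨ (ends e).2 = v).card

/-- `E(σ)`: the set of edges whose endpoints receive the same color in `σ`. -/
def agreeSet [Fintype E] {q : ℕ} (ends : E → V × V) (σ : V → Fin q) : Finset E :=
  univ.filter fun e => σ (ends e).1 = σ (ends e).2

/-- Unnormalized Potts weight `e^{β |E(σ)|}`. -/
def pottsWeight [Fintype E] (ends : E → V × V) (q : ℕ) (β : ℝ) (σ : V → Fin q) : ℝ :=
  Real.exp (β * (agreeSet ends σ).card)

/-- The `q`-state Potts measure on `G` at inverse temperature `β`. -/
def pottsPi [Fintype V] [DecidableEq V] [Fintype E] (ends : E → V × V) (q : ℕ) (β : ℝ)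
    (σ : V → Fin q) : ℝ :=
  pottsWeight ends q β σ / ∑ τ : V → Fin q, pottsWeight ends q β τ

/-- Transition matrix of the heat-bath (Glauber) dynamics for the Potts model. -/
def PHB [Fintype V] [DecidableEq V] [Fintype E] (ends : E → V × V) (q : ℕ) (β : ℝ)
    (σ τ : V → Fin q) : ℝ :=
  (Fintype.card V : ℝ)⁻¹ * ∑ v : V,
    (pottsPi ends q β τ / ∑ l : Fin q, pottsPi ends q β (Function.update σ v l)) *
      (if ∃ k : Fin q, τ = Function.update σ v k then 1 else 0)

/-- Transition matrix of the Swendsen–Wang dynamics for the Potts model,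
with `p = 1 - e^{-β}`. -/
def PSW [Fintype V] [Fintype E] [DecidableEq E] (ends : E → V × V) (q : ℕ) (β : ℝ)
    (σ τ : V → Fin q) : ℝ :=
  ∑ A ∈ (agreeSet ends σ ∩ agreeSet ends τ).powerset,
    (1 - Real.exp (-β)) ^ A.card * (Real.exp (-β)) ^ ((agreeSet ends σ).card - A.card) *
      ((q : ℝ) ^ compCount ends A)⁻¹

lemma subGraph_mono (ends : E → V × V) {A B : Finset E} (h : A ⊆ B) :
    subGraph ends A ≤ subGraph ends B := by
  intro x y hxy
  rw [subGraph, SimpleGraph.fromRel_adj] at hxy ⊢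
  obtain ⟨hne, hrel⟩ := hxy
  refine ⟨hne, ?_⟩
  rcases hrel with ⟨e, he, h'⟩ | ⟨e, he, h'⟩
  · exact Or.inl ⟨e, h he, h'⟩
  · exact Or.inr ⟨e, h he, h'⟩

lemma reachable_insert [DecidableEq E] (ends : E → V × V) (A : Finset E) (e : E)
    {x y : V} (h : (subGraph ends (insert e A)).Reachable x y) :
    (subGraph ends A).Reachable x y ∨
    ((subGraph ends A).Reachable x (ends e).1 ∧ (subGraph ends A).Reachable (ends e).2 y) ∨
    ((subGraph ends A).Reachable x (ends e).2 ∧ (subGraph ends A).Reachable (ends e).1 y) := by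
  obtain ⟨w⟩ := h
  induction w with
  | nil => exact Or.inl (SimpleGraph.Reachable.refl _)
  | @cons u z t hadj w ih =>
    rw [subGraph, SimpleGraph.fromRel_adj] at hadj
    obtain ⟨hne, hrel⟩ := hadj
    have hrel' : ∃ e' ∈ insert e A, ends e' = (u, z) ∨ ends e' = (z, u) := by
      rcases hrel with ⟨e', he', h'⟩ | ⟨e', he', h'⟩
      · exact ⟨e', he', h'⟩
      · exact ⟨e', he', h'.symm⟩
    obtain ⟨e', he', hee⟩ := hrel'
    rcases Finset.mem_insert.mp he' with rfl | heA
    · rcases hee with h1 | h1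
      · -- ends e' = (u, z)
        have hu : (ends e').1 = u := by rw [h1]
        have hz : (ends e').2 = z := by rw [h1]
        rcases ih with h2 | ⟨h2, h3⟩ | ⟨h2, h3⟩
        · exact Or.inr (Or.inl ⟨hu ▸ SimpleGraph.Reachable.refl _, hz ▸ h2⟩)
        · exact Or.inr (Or.inl ⟨hu ▸ SimpleGraph.Reachable.refl _, h3⟩)
        · exact Or.inl (hu ▸ h3)
      · -- ends e' = (z, u)
        have hu : (ends e').2 = u := by rw [h1]
        have hz : (ends e').1 = z := by rw [h1]
        rcases ih with h2 | ⟨h2, h3⟩ | ⟨h2, h3⟩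
        · exact Or.inr (Or.inr ⟨hu ▸ SimpleGraph.Reachable.refl _, hz ▸ h2⟩)
        · exact Or.inl (hu ▸ h3)
        · exact Or.inr (Or.inr ⟨hu ▸ SimpleGraph.Reachable.refl _, h3⟩)
    · have hadj' : (subGraph ends A).Adj u z := by
        rw [subGraph, SimpleGraph.fromRel_adj]
        exact ⟨hne, Or.inl ⟨e', heA, hee⟩⟩
      have hr : (subGraph ends A).Reachable u z := hadj'.reachable
      rcases ih with h2 | ⟨h2, h3⟩ | ⟨h2, h3⟩
      · exact Or.inl (hr.trans h2)
      · exact Or.inr (Or.inl ⟨hr.trans h2, h3⟩)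
      · exact Or.inr (Or.inr ⟨hr.trans h2, h3⟩)

lemma card_le_of_almost_inj {α β : Type*} [Finite α] [Finite β] (f : α → β) (a1 a2 : α)
    (h : ∀ x y, f x = f y → x = y ∨ ((x = a1 ∨ x = a2) ∧ (y = a1 ∨ y = a2))) :
    Nat.card α ≤ Nat.card β + 1 := by
  classical
  have hinj : Function.Injective
      (fun x : α => if x = a2 then (Sum.inr () : β ⊕ Unit) else Sum.inl (f x)) := by
    intro x y hxy
    by_cases hx : x = a2 <;> by_cases hy : y = a2 <;> simp [hx, hy] at hxy
    · exact hx.trans hy.symm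
    · rcases h x y hxy with h' | ⟨h1, h2⟩
      · exact h'
      · rw [h1.resolve_right hx, h2.resolve_right hy]
  calc Nat.card α ≤ Nat.card (β ⊕ Unit) := Nat.card_le_card_of_injective _ hinj
    _ = Nat.card β + 1 := by simp [Nat.card_sum]

lemma compCount_le_insert [Fintype V] [DecidableEq E] (ends : E → V × V)
    (A : Finset E) (e : E) :
    compCount ends A ≤ compCount ends (insert e A) + 1 := by
  classical
  have hle := subGraph_mono ends (Finset.subset_insert e A)
  set G := subGraph ends A
  set G' := subGraph ends (insert e A)
  let f : G.ConnectedComponent → G'.ConnectedComponent :=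
    SimpleGraph.ConnectedComponent.map (SimpleGraph.Hom.ofLE hle)
  apply card_le_of_almost_inj f (G.connectedComponentMk (ends e).1)
    (G.connectedComponentMk (ends e).2)
  intro x y
  refine SimpleGraph.ConnectedComponent.ind₂ (fun u z => ?_) x y
  intro hf
  have hfm : ∀ t : V, f (G.connectedComponentMk t) = G'.connectedComponentMk t := fun t => rfl
  rw [hfm, hfm] at hf
  have hreach : G'.Reachable u z := SimpleGraph.ConnectedComponent.exact hf
  rcases reachable_insert ends A e hreach with h1 | ⟨h1, h2⟩ | ⟨h1, h2⟩
  · exact Or.inl (SimpleGraph.ConnectedComponent.sound h1)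
  · exact Or.inr ⟨Or.inl (SimpleGraph.ConnectedComponent.sound h1),
      Or.inr (SimpleGraph.ConnectedComponent.sound h2.symm)⟩
  · exact Or.inr ⟨Or.inr (SimpleGraph.ConnectedComponent.sound h1),
      Or.inl (SimpleGraph.ConnectedComponent.sound h2.symm)⟩

lemma compCount_le_union [Fintype V] [DecidableEq E] (ends : E → V × V)
    (B S : Finset E) :
    compCount ends B ≤ compCount ends (B ∪ S) + S.card := by
  classical
  induction S using Finset.induction with
  | empty => simp
  | @insert s S hs ih =>
    have h1 : B ∪ insert s S = insert s (B ∪ S) := Finset.union_insert s B S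
    have h2 := compCount_le_insert ends (B ∪ S) s
    rw [Finset.card_insert_of_notMem hs, h1]
    omega

lemma sum_pow_card {α : Type*} [DecidableEq α] (t : Finset α) (x : ℝ) :
    ∑ S ∈ t.powerset, x ^ S.card = (x + 1) ^ t.card := by
  have h := Finset.prod_add (fun _ : α => x) (fun _ => (1 : ℝ)) t
  simp [Finset.prod_const] at h
  exact h.symm


def swTerm (ends : E → V × V) (q : ℕ) (β : ℝ) (n : ℕ) (A : Finset E) : ℝ :=
  (1 - Real.exp (-β)) ^ A.card * (Real.exp (-β)) ^ (n - A.card) *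
    ((q : ℝ) ^ compCount ends A)⁻¹

/-- Changing the color of a single vertex `v` in both arguments
changes the Swendsen–Wang transition probability by at most a factor
`(q e^{2β} − (q−1)e^β)^{deg_G(v)}`. -/
theorem sw_single_site_change
    {V E : Type*} [Fintype V] [DecidableEq V] [Fintype E] [DecidableEq E]
    (ends : E → V × V) (q : ℕ) (hq : 1 ≤ q) (β : ℝ) (hβ : 0 ≤ β)
    (σ τ : V → Fin q) (v : V) (k l : Fin q) :
    PSW ends q β (Function.update σ v k) (Function.update τ v l) ≤
      ((q : ℝ) * Real.exp (2 * β) - ((q : ℝ) - 1) * Real.exp β) ^ (degree ends v) *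
        PSW ends q β σ τ := by
  classical
  set σ' := Function.update σ v k with hσ'def
  set τ' := Function.update τ v l with hτ'def
  set D : Finset E := univ.filter (fun e => (ends e).1 = v ∨ (ends e).2 = v) with hDdef
  have hdeg : degree ends v = D.card := rfl
  set x : ℝ := (q : ℝ) * (Real.exp β - 1) with hxdef
  have hq1 : (1 : ℝ) ≤ (q : ℝ) := by exact_mod_cast hq
  have hq0 : (0 : ℝ) < (q : ℝ) := lt_of_lt_of_le one_pos hq1
  have hexp1 : (1 : ℝ) ≤ Real.exp β := Real.one_le_exp hβ
  have hx0 : 0 ≤ x := mul_nonneg hq0.le (by linarith)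
  have hp1 : Real.exp (-β) ≤ 1 := Real.exp_le_one_iff.mpr (by linarith)
  have h1p : 0 ≤ 1 - Real.exp (-β) := by linarith
  have hC : (q : ℝ) * Real.exp (2 * β) - ((q : ℝ) - 1) * Real.exp β
      = (x + 1) * Real.exp β := by
    rw [hxdef, show (2 : ℝ) * β = β + β by ring, Real.exp_add]; ring
  have hagree : ∀ (ρ : V → Fin q) (m : Fin q) (e : E), e ∉ D →
      (e ∈ agreeSet ends (Function.update ρ v m) ↔ e ∈ agreeSet ends ρ) := by
    intro ρ m e he
    simp only [hDdef, mem_filter, mem_univ, true_and, not_or] at he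
    simp [agreeSet, Function.update_of_ne he.1, Function.update_of_ne he.2]
  set I' := agreeSet ends σ' ∩ agreeSet ends τ' with hI'
  set I := agreeSet ends σ ∩ agreeSet ends τ with hI
  have hIDsub : I' \ D ⊆ I := by
    intro e he
    rw [Finset.mem_sdiff] at he
    obtain ⟨heI, heD⟩ := he
    rw [hI', Finset.mem_inter] at heI
    rw [hI, Finset.mem_inter]
    exact ⟨(hagree σ k e heD).mp heI.1, (hagree τ l e heD).mp heI.2⟩
  set a' := (agreeSet ends σ').card with ha'def
  set a := (agreeSet ends σ).card with hadef
  have hcard_a : a ≤ a' + D.card := by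
    have hsub : agreeSet ends σ ⊆ agreeSet ends σ' ∪ D := by
      intro e he
      by_cases heD : e ∈ D
      · exact Finset.mem_union_right _ heD
      · exact Finset.mem_union_left _ ((hagree σ k e heD).mpr he)
    calc a ≤ (agreeSet ends σ' ∪ D).card := Finset.card_le_card hsub
      _ ≤ a' + D.card := Finset.card_union_le _ _
  have hw0 : ∀ (n : ℕ) (A : Finset E), 0 ≤ swTerm ends q β n A := by
    intro n A
    exact mul_nonneg (mul_nonneg (pow_nonneg h1p _) (pow_nonneg (Real.exp_nonneg _) _))
      (inv_nonneg.mpr (pow_nonneg hq0.le _))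
  have hPSW' : PSW ends q β σ' τ' = ∑ A ∈ I'.powerset, swTerm ends q β a' A := rfl
  have hPSW : PSW ends q β σ τ = ∑ A ∈ I.powerset, swTerm ends q β a A := rfl
  -- fiber decomposition
  have hfib : ∑ A ∈ I'.powerset, swTerm ends q β a' A
      = ∑ B ∈ (I' \ D).powerset, ∑ A ∈ I'.powerset.filter (fun A => A \ D = B),
          swTerm ends q β a' A := by
    refine (Finset.sum_fiberwise_of_maps_to ?_ _).symm
    intro A hA
    rw [Finset.mem_powerset] at hA ⊢
    exact Finset.sdiff_subset_sdiff hA (Finset.Subset.refl D)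
  have hB_bound : ∀ B ∈ (I' \ D).powerset,
      ∑ A ∈ I'.powerset.filter (fun A => A \ D = B), swTerm ends q β a' A
        ≤ ((x + 1) * Real.exp β) ^ D.card * swTerm ends q β a B := by
    intro B hBmem
    have hB : B ⊆ I' \ D := Finset.mem_powerset.mp hBmem
    have hBD : Disjoint B D := Finset.disjoint_of_subset_left hB Finset.sdiff_disjoint
    have hBI' : B ⊆ I' := hB.trans (Finset.sdiff_subset)
    have hBa : B.card ≤ a := by
      refine Finset.card_le_card ((hB.trans hIDsub).trans ?_)
      rw [hI]; exact Finset.inter_subset_left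
    -- fiber = image
    have hfibeq : I'.powerset.filter (fun A => A \ D = B)
        = ((I' ∩ D).powerset).image (fun S => B ∪ S) := by
      ext A
      simp only [Finset.mem_filter, Finset.mem_powerset, Finset.mem_image]
      constructor
      · rintro ⟨hA, rfl⟩
        exact ⟨A ∩ D, Finset.inter_subset_inter hA (Finset.Subset.refl D),
          Finset.sdiff_union_inter A D⟩
      · rintro ⟨S, hS, rfl⟩
        have hSD : S ⊆ D := hS.trans Finset.inter_subset_right
        constructor
        · exact Finset.union_subset hBI' (hS.trans Finset.inter_subset_left)
        · rw [Finset.union_sdiff_distrib, Finset.sdiff_eq_self_iff_disjoint.mpr hBD,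
            Finset.sdiff_eq_empty_iff_subset.mpr hSD, Finset.union_empty]
    rw [hfibeq, Finset.sum_image ?hinj]
    case hinj =>
      intro S₁ h₁ S₂ h₂ hun
      rw [Finset.mem_coe, Finset.mem_powerset] at h₁ h₂
      have key : ∀ S : Finset E, S ⊆ I' ∩ D → (B ∪ S) ∩ D = S := by
        intro S hS
        rw [Finset.union_inter_distrib_right, Finset.disjoint_iff_inter_eq_empty.mp hBD,
          Finset.empty_union, Finset.inter_eq_left]
        exact hS.trans Finset.inter_subset_right
      rw [← key S₁ h₁, ← key S₂ h₂, show B ∪ S₁ = B ∪ S₂ from hun]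
    -- termwise bound
    have hterm : ∀ S ∈ (I' ∩ D).powerset,
        swTerm ends q β a' (B ∪ S)
          ≤ x ^ S.card * (Real.exp β ^ D.card * swTerm ends q β a B) := by
      intro S hS
      rw [Finset.mem_powerset] at hS
      have hSD : S ⊆ D := hS.trans Finset.inter_subset_right
      have hSI : S ⊆ I' := hS.trans Finset.inter_subset_left
      have hdisj : Disjoint B S := hBD.mono_right hSD
      have hAsub : B ∪ S ⊆ I' := Finset.union_subset hBI' hSI
      have hcardA : (B ∪ S).card = B.card + S.card := Finset.card_union_of_disjoint hdisj
      have hAa' : B.card + S.card ≤ a' := by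
        rw [← hcardA]
        refine Finset.card_le_card (hAsub.trans ?_)
        rw [hI']; exact Finset.inter_subset_left
      have hcomp : compCount ends B ≤ compCount ends (B ∪ S) + S.card :=
        compCount_le_union ends B S
      -- exponential bound
      have hexp : Real.exp (-β) ^ (a' - (B.card + S.card))
          ≤ Real.exp β ^ S.card * Real.exp β ^ D.card * Real.exp (-β) ^ (a - B.card) := by
        rw [← Real.exp_nat_mul, ← Real.exp_nat_mul, ← Real.exp_nat_mul, ← Real.exp_nat_mul,
          ← Real.exp_add, ← Real.exp_add]
        apply Real.exp_le_exp.mpr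
        rw [Nat.cast_sub hAa', Nat.cast_sub hBa]
        push_cast
        nlinarith [mul_nonneg hβ (sub_nonneg.mpr (show (a : ℝ) ≤ (a' : ℝ) + (D.card : ℝ) by
          exact_mod_cast hcard_a))]
      -- component bound
      have hcompineq : ((q : ℝ) ^ compCount ends (B ∪ S))⁻¹
          ≤ (q : ℝ) ^ S.card * ((q : ℝ) ^ compCount ends B)⁻¹ := by
        have h1 : (q : ℝ) ^ compCount ends B
            ≤ (q : ℝ) ^ (compCount ends (B ∪ S) + S.card) := pow_le_pow_right₀ hq1 hcomp
        rw [pow_add] at h1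
        have h2 : (0 : ℝ) < (q : ℝ) ^ compCount ends (B ∪ S) := by positivity
        have h3 : (0 : ℝ) < (q : ℝ) ^ compCount ends B := by positivity
        rw [inv_eq_one_div, inv_eq_one_div, mul_one_div, div_le_div_iff₀ h2 h3, one_mul,
          mul_comm ((q : ℝ) ^ S.card)]
        exact h1
      calc swTerm ends q β a' (B ∪ S)
          = ((1 - Real.exp (-β)) ^ B.card * (1 - Real.exp (-β)) ^ S.card) *
            (Real.exp (-β) ^ (a' - (B.card + S.card)) *
              ((q : ℝ) ^ compCount ends (B ∪ S))⁻¹) := by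
            rw [swTerm, hcardA, pow_add]; ring
        _ ≤ ((1 - Real.exp (-β)) ^ B.card * (1 - Real.exp (-β)) ^ S.card) *
            ((Real.exp β ^ S.card * Real.exp β ^ D.card * Real.exp (-β) ^ (a - B.card)) *
              ((q : ℝ) ^ S.card * ((q : ℝ) ^ compCount ends B)⁻¹)) := by
            refine mul_le_mul_of_nonneg_left ?_
              (mul_nonneg (pow_nonneg h1p _) (pow_nonneg h1p _))
            exact mul_le_mul hexp hcompineq (by positivity) (by positivity)
        _ = x ^ S.card * (Real.exp β ^ D.card * swTerm ends q β a B) := by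
            have hx' : x = (1 - Real.exp (-β)) * Real.exp β * (q : ℝ) := by
              rw [hxdef, Real.exp_neg]
              field_simp
            rw [hx', swTerm, mul_pow, mul_pow]
            ring
    calc ∑ S ∈ (I' ∩ D).powerset, swTerm ends q β a' (B ∪ S)
        ≤ ∑ S ∈ (I' ∩ D).powerset,
            x ^ S.card * (Real.exp β ^ D.card * swTerm ends q β a B) :=
          Finset.sum_le_sum hterm
      _ = (x + 1) ^ (I' ∩ D).card * (Real.exp β ^ D.card * swTerm ends q β a B) := by
          rw [← Finset.sum_mul, sum_pow_card]
      _ ≤ (x + 1) ^ D.card * (Real.exp β ^ D.card * swTerm ends q β a B) := by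
          refine mul_le_mul_of_nonneg_right
            (pow_le_pow_right₀ (by linarith) (Finset.card_le_card Finset.inter_subset_right)) ?_
          exact mul_nonneg (pow_nonneg (Real.exp_nonneg _) _) (hw0 a B)
      _ = ((x + 1) * Real.exp β) ^ D.card * swTerm ends q β a B := by
          rw [mul_pow]; ring
  have hCd0 : 0 ≤ ((x + 1) * Real.exp β) ^ D.card :=
    pow_nonneg (mul_nonneg (by linarith) (Real.exp_nonneg _)) _
  calc PSW ends q β σ' τ'
      = ∑ B ∈ (I' \ D).powerset, ∑ A ∈ I'.powerset.filter (fun A => A \ D = B),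
          swTerm ends q β a' A := by rw [hPSW', hfib]
    _ ≤ ∑ B ∈ (I' \ D).powerset, ((x + 1) * Real.exp β) ^ D.card * swTerm ends q β a B :=
        Finset.sum_le_sum hB_bound
    _ = ((x + 1) * Real.exp β) ^ D.card * ∑ B ∈ (I' \ D).powerset, swTerm ends q β a B := by
        rw [Finset.mul_sum]
    _ ≤ ((x + 1) * Real.exp β) ^ D.card * ∑ B ∈ I.powerset, swTerm ends q β a B := by
        refine mul_le_mul_of_nonneg_left ?_ hCd0
        refine Finset.sum_le_sum_of_subset_of_nonneg (Finset.powerset_mono.mpr hIDsub) ?_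
        intro B _ _
        exact hw0 a B
    _ = ((q : ℝ) * Real.exp (2 * β) - ((q : ℝ) - 1) * Real.exp β) ^ (degree ends v) *
          PSW ends q β σ τ := by rw [hPSW, hC, hdeg]
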